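/- For J > 1, with ρ_c = 2/(J+1), ρ_e = 4J/(J+1)², and f(ρ) = ρ(1-ρ)^J, the function γ_J(ρ) = ρ²(1-ρ)(ρ - ρ_e) / (J(ρ - ρ_c)²) satisfies, for ρ ∈ (ρ_c, 1), the ODE γ'(ρ) = (f''(ρ)γ(ρ)² + (f(ρ) + 2ρ f'(ρ))γ(ρ) + ρ² f(ρ)) / (ρ f(ρ)). -/

import Mathlib

noncomputable def fJ (J : ℝ) : ℝ → ℝ := fun ρ => ρ * (1 - ρ) ^ J

noncomputable def gammaJ (J : ℝ) : ℝ → ℝ := fun ρ =>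
  ρ ^ 2 * (1 - ρ) * (ρ - 4 * J / (J + 1) ^ 2) / (J * (ρ - 2 / (J + 1)) ^ 2)

lemma rpow_base_hasDerivAt (J x : ℝ) (hx : x < 1) :
    HasDerivAt (fun y : ℝ => (1 - y) ^ J) (-(J * (1 - x) ^ (J - 1))) x := by
  have h1 : HasDerivAt (fun y : ℝ => 1 - y) (-1) x := by
    simpa using (hasDerivAt_const x (1:ℝ)).fun_sub (hasDerivAt_id x)
  have h2 : HasDerivAt (fun t : ℝ => t ^ J) (J * (1 - x) ^ (J - 1)) (1 - x) :=
    Real.hasDerivAt_rpow_const (Or.inl (by linarith))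
  simpa [Function.comp_def] using h2.comp x h1

lemma fJ_hasDerivAt (J x : ℝ) (hx : x < 1) :
    HasDerivAt (fJ J) ((1 - x) ^ J - J * x * (1 - x) ^ (J - 1)) x := by
  have h := (hasDerivAt_id x).mul (rpow_base_hasDerivAt J x hx)
  have : HasDerivAt (fJ J) (1 * (1 - x) ^ J + x * -(J * (1 - x) ^ (J - 1))) x := h
  convert this using 1
  ring

lemma fJ_deriv (J x : ℝ) (hx : x < 1) :
    deriv (fJ J) x = (1 - x) ^ J - J * x * (1 - x) ^ (J - 1) :=
  (fJ_hasDerivAt J x hx).deriv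

lemma fJ_deriv2 (J x : ℝ) (hx : x < 1) :
    deriv (deriv (fJ J)) x =
      -(J * (1 - x) ^ (J - 1)) - (J * (1 - x) ^ (J - 1)
        - J * x * (J - 1) * (1 - x) ^ (J - 2)) := by
  have hev : deriv (fJ J) =ᶠ[nhds x]
      fun y => (1 - y) ^ J - J * y * (1 - y) ^ (J - 1) := by
    filter_upwards [Iio_mem_nhds hx] with y hy
    exact fJ_deriv J y hy
  rw [hev.deriv_eq]
  have h1 : HasDerivAt (fun y : ℝ => (1 - y) ^ J) (-(J * (1 - x) ^ (J - 1))) x :=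
    rpow_base_hasDerivAt J x hx
  have h2 : HasDerivAt (fun y : ℝ => (1 - y) ^ (J - 1))
      (-((J - 1) * (1 - x) ^ (J - 1 - 1))) x := by
    have h1' : HasDerivAt (fun y : ℝ => 1 - y) (-1) x := by
      simpa using (hasDerivAt_const x (1:ℝ)).fun_sub (hasDerivAt_id x)
    have h2' : HasDerivAt (fun t : ℝ => t ^ (J - 1))
        ((J - 1) * (1 - x) ^ (J - 1 - 1)) (1 - x) :=
      Real.hasDerivAt_rpow_const (Or.inl (by linarith))
    simpa [Function.comp_def] using h2'.comp x h1'
  have h3 : HasDerivAt (fun y : ℝ => J * y * (1 - y) ^ (J - 1))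
      (J * (1 - x) ^ (J - 1) + J * x * (-((J - 1) * (1 - x) ^ (J - 1 - 1)))) x := by
    have hJx : HasDerivAt (fun y : ℝ => J * y) J x := by
      simpa using (hasDerivAt_id x).const_mul J
    simpa [mul_comm, mul_left_comm] using hJx.fun_mul h2
  have := (h1.fun_sub h3).deriv
  rw [this]
  have : J - 1 - 1 = J - 2 := by ring
  rw [this]; ring

set_option maxHeartbeats 4000000 in
theorem stmt5 (J : ℝ) (hJ : 1 < J) (ρ : ℝ) (hρ : ρ ∈ Set.Ioo (2 / (J + 1)) (1:ℝ)) :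
    deriv (gammaJ J) ρ =
      (deriv (deriv (fJ J)) ρ * (gammaJ J ρ) ^ 2
        + (fJ J ρ + 2 * ρ * deriv (fJ J) ρ) * gammaJ J ρ
        + ρ ^ 2 * fJ J ρ) / (ρ * fJ J ρ) := by
  obtain ⟨hρc, hρ1⟩ := hρ
  have hJ1 : (0:ℝ) < J + 1 := by linarith
  have hJ1' : (J + 1 : ℝ) ≠ 0 := ne_of_gt hJ1
  have hρpos : 0 < ρ := lt_trans (by positivity) hρc
  have hρ0 : ρ ≠ 0 := ne_of_gt hρpos
  have h1ρ : 0 < 1 - ρ := by linarith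
  have h1ρ' : (1 - ρ : ℝ) ≠ 0 := ne_of_gt h1ρ
  have hdenpos : 0 < ρ - 2 / (J + 1) := by linarith
  have hden : ρ - 2 / (J + 1) ≠ 0 := ne_of_gt hdenpos
  have hden2 : ρ * (J + 1) - 2 ≠ 0 := by
    have : ρ - 2 / (J + 1) = (ρ * (J + 1) - 2) / (J + 1) := by field_simp
    intro h
    rw [this, h] at hdenpos
    simp at hdenpos
  have hJ0 : J ≠ 0 := by linarith
  have hrBpos : (0:ℝ) < (1 - ρ) ^ J := Real.rpow_pos_of_pos h1ρ J
  have hrB : ((1 - ρ : ℝ) ^ J : ℝ) ≠ 0 := ne_of_gt hrBpos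
  -- derivative of gammaJ
  have hP : HasDerivAt (fun x : ℝ => x ^ 2 * (1 - x) * (x - 4 * J / (J + 1) ^ 2))
      ((2 * ρ * (1 - ρ) + ρ ^ 2 * (-1)) * (ρ - 4 * J / (J + 1) ^ 2)
        + ρ ^ 2 * (1 - ρ) * 1) ρ := by
    have hA : HasDerivAt (fun x : ℝ => x ^ 2 * (1 - x))
        (2 * ρ * (1 - ρ) + ρ ^ 2 * (-1)) ρ := by
      have h1 : HasDerivAt (fun x : ℝ => x ^ 2) (2 * ρ) ρ := by
        simpa using hasDerivAt_pow 2 ρ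
      have h2 : HasDerivAt (fun x : ℝ => 1 - x) (-1) ρ := by
        simpa using (hasDerivAt_const ρ (1:ℝ)).fun_sub (hasDerivAt_id ρ)
      simpa using h1.fun_mul h2
    have hB : HasDerivAt (fun x : ℝ => x - 4 * J / (J + 1) ^ 2) 1 ρ := by
      simpa using (hasDerivAt_id ρ).fun_sub (hasDerivAt_const ρ (4 * J / (J + 1) ^ 2))
    exact hA.mul hB
  have hQ : HasDerivAt (fun x : ℝ => J * (x - 2 / (J + 1)) ^ 2)
      (J * (2 * (ρ - 2 / (J + 1)))) ρ := by
    have h1 : HasDerivAt (fun x : ℝ => x - 2 / (J + 1)) 1 ρ := by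
      simpa using (hasDerivAt_id ρ).fun_sub (hasDerivAt_const ρ (2 / (J + 1)))
    have h2 : HasDerivAt (fun x : ℝ => (x - 2 / (J + 1)) ^ 2)
        (2 * (ρ - 2 / (J + 1))) ρ := by
      simpa using (h1.fun_pow 2)
    simpa [mul_comm, mul_left_comm] using h2.const_mul J
  have hQ0 : J * (ρ - 2 / (J + 1)) ^ 2 ≠ 0 := mul_ne_zero hJ0 (pow_ne_zero 2 hden)
  have hg : deriv (gammaJ J) ρ =
      (((2 * ρ * (1 - ρ) + ρ ^ 2 * (-1)) * (ρ - 4 * J / (J + 1) ^ 2)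
          + ρ ^ 2 * (1 - ρ) * 1) * (J * (ρ - 2 / (J + 1)) ^ 2)
        - (ρ ^ 2 * (1 - ρ) * (ρ - 4 * J / (J + 1) ^ 2))
            * (J * (2 * (ρ - 2 / (J + 1)))))
        / (J * (ρ - 2 / (J + 1)) ^ 2) ^ 2 := (hP.div hQ hQ0).deriv
  have hr1 : (1 - ρ) ^ (J - 1) = (1 - ρ) ^ J / (1 - ρ) := by
    rw [Real.rpow_sub h1ρ, Real.rpow_one]
  have hr2 : (1 - ρ) ^ (J - 2) = (1 - ρ) ^ J / (1 - ρ) ^ 2 := by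
    rw [Real.rpow_sub h1ρ]
    norm_num [Real.rpow_natCast]
  have hfρ : fJ J ρ = ρ * (1 - ρ) ^ J := rfl
  rw [hg, fJ_deriv J ρ hρ1, fJ_deriv2 J ρ hρ1, hfρ]
  simp only [gammaJ, hr1, hr2]
  field_simp
  ring
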